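/- For every integer n > 0, the sum over all weakly decreasing tuples (λ₁, λ₂, ..., λₙ) of nonnegative integers with λ₁ + λ₂ + ... + λₙ = n of the rational quantity C(λ₁,λ₂)·C(λ₂,λ₃)···C(λₙ,0) · (n/λ₁) · ∏_{i=1}^{n} (|2i−3|/i)^{λᵢ} equals 2^(n-1). -/

import Mathlib

open Finset

/-- Weakly decreasing tuples `(λ₁,…,λₙ)` of nonnegative integers with `λ₁+⋯+λₙ = n`. -/
def partitionTuples (n : ℕ) : Finset (Fin n → ℕ) :=
  (Finset.Nat.antidiagonalTuple n n).filter fun t => ∀ i j : Fin n, i ≤ j → t j ≤ t i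

/-- The product `C(λ₁,λ₂)·C(λ₂,λ₃)⋯C(λₙ,0)` with the convention `λ_{n+1} = 0`. -/
def binomProd (n : ℕ) (t : Fin n → ℕ) : ℕ :=
  ∏ i : Fin n, Nat.choose (t i) (if h : (i : ℕ) + 1 < n then t ⟨(i : ℕ) + 1, h⟩ else 0)

noncomputable def aQ (i : ℕ) : ℚ := ((|2 * ((i:ℤ)+1) - 3| : ℤ) : ℚ) / ((i:ℚ)+1)
noncomputable def bQ (j : ℕ) : ℚ := ∏ i ∈ Finset.range j, aQ i
def chainN (N : ℕ) (f : ℕ → ℕ) : ℕ := ∏ i ∈ Finset.range N, (f i).choose (f (i+1))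
noncomputable def apow (N : ℕ) (f : ℕ → ℕ) : ℚ := ∏ i ∈ Finset.range N, (aQ i) ^ (f i)
noncomputable def wQ (m N : ℕ) (f : ℕ → ℕ) : ℚ :=
  ((m:ℚ)/(f 0 : ℚ)) * (chainN N f : ℚ) * apow N f

def TT (N m : ℕ) : Finset (Fin N → ℕ) :=
  (Finset.Nat.antidiagonalTuple N m).filter fun t => ∀ i j : Fin N, i ≤ j → t j ≤ t i

def extN {N : ℕ} (t : Fin N → ℕ) : ℕ → ℕ := fun k => if h : k < N then t ⟨k,h⟩ else 0

noncomputable def QQ (N m : ℕ) : ℚ := ∑ t ∈ TT N m, wQ m N (extN t)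

def sCol (N m : ℕ) : Fin N → ℕ := fun i => if (i:ℕ) < m then 1 else 0



lemma aQ_pos (i : ℕ) : 0 < aQ i := by
  unfold aQ
  apply div_pos
  · have : (0:ℤ) < |2*((i:ℤ)+1) - 3| := abs_pos.2 (by omega)
    exact_mod_cast this
  · positivity

lemma aQ_succ (i : ℕ) (hi : 1 ≤ i) : aQ i = (2*(i:ℚ) - 1)/((i:ℚ)+1) := by
  unfold aQ
  have h : |2*((i:ℤ)+1) - 3| = 2*(i:ℤ) - 1 := by
    rw [abs_of_nonneg] <;> omega
  rw [h]
  push_cast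
  ring_nf

lemma bQ_one : bQ 1 = 1 := by
  simp [bQ, aQ]
  norm_num

lemma bQ_succ (m : ℕ) (hm : 1 ≤ m) : ((m:ℚ)+1) * bQ (m+1) = (2*(m:ℚ)-1) * bQ m := by
  have : bQ (m+1) = bQ m * aQ m := by
    simp [bQ, Finset.prod_range_succ]
  rw [this, aQ_succ m hm]
  have h1 : ((m:ℚ)+1) ≠ 0 := by positivity
  field_simp

lemma chain_fact (N : ℕ) (f : ℕ → ℕ) (hdec : ∀ k, k < N → f (k+1) ≤ f k) (hN : f N = 0) :
    (chainN N f) * ∏ i ∈ range N, (f i - f (i+1)).factorial = (f 0).factorial := by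
  induction N generalizing f with
  | zero => simp [chainN, hN]
  | succ N ih =>
    have h1 : chainN (N+1) f = chainN N (fun k => f (k+1)) * (f 0).choose (f 1) := by
      simp [chainN, Finset.prod_range_succ']
    have h2 : ∏ i ∈ range (N+1), (f i - f (i+1)).factorial
        = (∏ i ∈ range N, ((fun k => f (k+1)) i - (fun k => f (k+1)) (i+1)).factorial)
            * (f 0 - f 1).factorial := by
      simpa using Finset.prod_range_succ' (fun i => (f i - f (i+1)).factorial) N
    have ihg := ih (fun k => f (k+1)) (fun k hk => hdec (k+1) (by omega)) hN
    have hle : f 1 ≤ f 0 := hdec 0 (by omega)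
    calc chainN (N+1) f * ∏ i ∈ range (N+1), (f i - f (i+1)).factorial
        = ((chainN N (fun k => f (k+1))) * ∏ i ∈ range N,
            ((fun k => f (k+1)) i - (fun k => f (k+1)) (i+1)).factorial)
          * ((f 0).choose (f 1) * (f 0 - f 1).factorial) := by rw [h1, h2]; ring
      _ = (f 1).factorial * ((f 0).choose (f 1) * (f 0 - f 1).factorial) := by rw [ihg]
      _ = (f 0).choose (f 1) * (f 1).factorial * (f 0 - f 1).factorial := by ring
      _ = (f 0).factorial := Nat.choose_mul_factorial_mul_factorial hle

lemma abel_sum (K : ℕ) (g : ℕ → ℚ) :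
    ∑ k ∈ range K, ((K:ℚ) - k) * (g k - g (k+1))
      = K * g 0 - ∑ j ∈ Icc 1 K, g j := by
  induction K with
  | zero => simp
  | succ K ih =>
    have htel : ∑ k ∈ range (K+1), (g k - g (k+1)) = g 0 - g (K+1) :=
      Finset.sum_range_sub' g (K+1)
    have hsplit : ∑ k ∈ range (K+1), (((K:ℚ)+1) - k) * (g k - g (k+1))
        = ∑ k ∈ range (K+1), ((K:ℚ) - k) * (g k - g (k+1))
          + ∑ k ∈ range (K+1), (g k - g (k+1)) := by
      rw [← Finset.sum_add_distrib]
      apply Finset.sum_congr rfl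
      intro k _
      ring
    have hlast : ∑ k ∈ range (K+1), ((K:ℚ) - k) * (g k - g (k+1))
        = ∑ k ∈ range K, ((K:ℚ) - k) * (g k - g (k+1)) := by
      rw [Finset.sum_range_succ]
      simp
    have hIcc : ∑ j ∈ Icc 1 (K+1), g j = ∑ j ∈ Icc 1 K, g j + g (K+1) :=
      Finset.sum_Icc_succ_top (by omega) g
    push_cast
    rw [hsplit, hlast, ih, htel, hIcc]
    ring





lemma mem_TT {N m : ℕ} {t : Fin N → ℕ} :
    t ∈ TT N m ↔ (∑ i, t i = m) ∧ ∀ i j : Fin N, i ≤ j → t j ≤ t i := by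
  simp [TT, Finset.mem_filter, Finset.Nat.mem_antidiagonalTuple]

lemma extN_dec {N m : ℕ} {t : Fin N → ℕ} (ht : t ∈ TT N m) (k : ℕ) :
    extN t (k+1) ≤ extN t k := by
  have hmono := (mem_TT.1 ht).2
  unfold extN
  split_ifs with h1 h2
  · exact hmono ⟨k, by omega⟩ ⟨k+1, h1⟩ (by simp)
  · omega
  · exact Nat.zero_le _
  · exact Nat.zero_le _

lemma extN_dec' {N m : ℕ} {t : Fin N → ℕ} (ht : t ∈ TT N m) {k l : ℕ} (hkl : k ≤ l) :
    extN t l ≤ extN t k := by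
  induction l with
  | zero =>
    have : k = 0 := by omega
    rw [this]
  | succ l ih =>
    rcases Nat.eq_or_lt_of_le hkl with h | h
    · rw [h]
    · exact le_trans (extN_dec ht l) (ih (by omega))

lemma extN_supp {N : ℕ} (t : Fin N → ℕ) (k : ℕ) (hk : N ≤ k) : extN t k = 0 := by
  unfold extN
  rw [dif_neg (by omega)]

lemma extN_sum {N m : ℕ} {t : Fin N → ℕ} (ht : t ∈ TT N m) :
    ∑ i ∈ range N, extN t i = m := by
  rw [← Fin.sum_univ_eq_sum_range]
  rw [← (mem_TT.1 ht).1]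
  apply Finset.sum_congr rfl
  intro i _
  unfold extN
  rw [dif_pos i.isLt]

lemma extN_sCol (N m : ℕ) (hmN : m ≤ N) :
    extN (sCol N m) = fun k => if k < m then 1 else 0 := by
  funext k
  unfold extN sCol
  by_cases h : k < N
  · rw [dif_pos h]
  · rw [dif_neg h, if_neg (by omega)]

lemma sCol_mem (N m : ℕ) (hmN : m ≤ N) : sCol N m ∈ TT N m := by
  rw [mem_TT]
  constructor
  · have : ∀ i : Fin N, sCol N m i = (fun k : ℕ => if k < m then 1 else 0) (i : ℕ) := by
      intro i; rfl
    simp only [this]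
    rw [Fin.sum_univ_eq_sum_range (fun i => if i < m then 1 else 0) N]
    rw [Finset.sum_boole]
    have : (range N).filter (fun i => i < m) = range m := by
      ext i; simp; omega
    rw [this]
    simp
  · intro i j hij
    unfold sCol
    split_ifs <;> omega

lemma TT_low {N m : ℕ} (hm : 1 ≤ m) (hmN : m ≤ N) {t : Fin N → ℕ}
    (ht : t ∈ TT N m) (h1 : extN t 0 ≤ 1) : t = sCol N m := by
  have hdec : ∀ {k l : ℕ}, k ≤ l → extN t l ≤ extN t k := fun h => extN_dec' ht h
  have hsum := extN_sum ht
  have hub : ∀ k, extN t k ≤ 1 := fun k => le_trans (hdec (Nat.zero_le k)) h1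
  -- claim A : k < m → extN t k = 1
  have hA : ∀ k, k < m → extN t k = 1 := by
    by_contra hc
    push_neg at hc
    obtain ⟨k0, hk0m, hk0⟩ := hc
    have hk00 : extN t k0 = 0 := by have := hub k0; omega
    have hle : ∀ i ∈ range N, extN t i ≤ if i < k0 then 1 else 0 := by
      intro i _
      by_cases h : i < k0
      · rw [if_pos h]; exact hub i
      · rw [if_neg h]
        have := hdec (show k0 ≤ i by omega)
        omega
    have : m ≤ ∑ i ∈ range N, if i < k0 then 1 else 0 := by
      rw [← hsum]; exact Finset.sum_le_sum hle
    have : (∑ i ∈ range N, if i < k0 then 1 else 0) = k0 := by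
      rw [Finset.sum_boole]
      have heq : (range N).filter (fun i => i < k0) = range k0 := by
        ext i; simp; omega
      rw [heq]; simp
    omega
  -- claim B : m ≤ k → extN t k = 0
  have hB : ∀ k, m ≤ k → extN t k = 0 := by
    by_contra hc
    push_neg at hc
    obtain ⟨k0, hk0m, hk0⟩ := hc
    have hk0N : k0 < N := by
      by_contra h
      rw [extN_supp t k0 (by omega)] at hk0
      omega
    have hge : ∀ i ∈ range (k0+1), 1 ≤ extN t i := by
      intro i hi
      simp only [Finset.mem_range] at hi
      have := hdec (show i ≤ k0 by omega)
      omega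
    have : k0 + 1 ≤ ∑ i ∈ range (k0+1), extN t i := by
      calc k0 + 1 = ∑ _i ∈ range (k0+1), 1 := by simp
        _ ≤ _ := Finset.sum_le_sum hge
    have hsub : ∑ i ∈ range (k0+1), extN t i ≤ ∑ i ∈ range N, extN t i :=
      Finset.sum_le_sum_of_subset (by simp; omega)
    omega
  funext i
  have h1 : extN t (i:ℕ) = t i := by unfold extN; rw [dif_pos i.isLt]
  unfold sCol
  by_cases h : (i:ℕ) < m
  · rw [if_pos h, ← h1, hA _ h]
  · rw [if_neg h, ← h1, hB _ (by omega)]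

lemma wQ_sCol (N m : ℕ) (hm : 1 ≤ m) (hmN : m ≤ N) :
    wQ m N (extN (sCol N m)) = m * bQ m := by
  rw [extN_sCol N m hmN]
  unfold wQ
  have hf0 : (if 0 < m then 1 else 0) = 1 := if_pos (by omega)
  have hchain : chainN N (fun k => if k < m then 1 else 0) = 1 := by
    unfold chainN
    apply Finset.prod_eq_one
    intro i _
    simp only []
    split_ifs <;> simp <;> omega
  have hapow : apow N (fun k => if k < m then 1 else 0) = bQ m := by
    unfold apow bQ
    rw [← Finset.prod_range_mul_prod_Ico _ hmN]
    have h1 : ∏ i ∈ range m, aQ i ^ (if i < m then 1 else 0) = ∏ i ∈ range m, aQ i := by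
      apply Finset.prod_congr rfl
      intro i hi
      simp only [Finset.mem_range] at hi
      rw [if_pos hi, pow_one]
    have h2 : ∏ i ∈ Ico m N, aQ i ^ (if i < m then 1 else 0) = 1 := by
      apply Finset.prod_eq_one
      intro i hi
      simp only [Finset.mem_Ico] at hi
      rw [if_neg (by omega), pow_zero]
    rw [h1, h2, mul_one]
  rw [hchain, hapow]
  have : ((fun k => if k < m then 1 else 0) 0 : ℕ) = 1 := hf0
  rw [this]
  simp

lemma QQ_split (N m : ℕ) (hm : 1 ≤ m) (hmN : m ≤ N) :
    QQ N m = m * bQ m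
      + ∑ t ∈ (TT N m).filter (fun t => 2 ≤ extN t 0), wQ m N (extN t) := by
  classical
  unfold QQ
  rw [← Finset.sum_filter_add_sum_filter_not (TT N m) (fun t => 2 ≤ extN t 0)]
  have hset : (TT N m).filter (fun t => ¬ 2 ≤ extN t 0) = {sCol N m} := by
    ext t
    simp only [Finset.mem_filter, Finset.mem_singleton]
    constructor
    · rintro ⟨ht, h2⟩
      exact TT_low hm hmN ht (by omega)
    · rintro rfl
      refine ⟨sCol_mem N m hmN, ?_⟩
      rw [extN_sCol N m hmN]
      have : (if (0:ℕ) < m then 1 else 0) = 1 := if_pos (by omega)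
      simp only [this]
      omega
  rw [hset, Finset.sum_singleton, wQ_sCol N m hm hmN]
  ring

lemma dec_trans (f : ℕ → ℕ) (hdec : ∀ k, f (k+1) ≤ f k) {k l : ℕ} (h : k ≤ l) :
    f l ≤ f k := by
  induction l with
  | zero => have : k = 0 := by omega
            rw [this]
  | succ l ih =>
    rcases Nat.eq_or_lt_of_le h with h' | h'
    · rw [h']
    · exact le_trans (hdec l) (ih (by omega))

lemma chain_ratio (N : ℕ) (f : ℕ → ℕ) (j : ℕ)
    (hdec : ∀ k, f (k+1) ≤ f k) (hN : f N = 0)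
    (hj1 : 1 ≤ j) (hjN : j < N) (hstrict : f j < f (j-1)) :
    f 0 * chainN N (fun k => f k - if k < j then 1 else 0)
      = (f (j-1) - f j) * chainN N f := by
  set f' : ℕ → ℕ := fun k => f k - if k < j then 1 else 0 with hf'
  have hf'app : ∀ k, f' k = f k - if k < j then 1 else 0 := fun k => rfl
  have hfj1 : ∀ i, i ≤ j - 1 → 1 ≤ f i := by
    intro i hi
    have := dec_trans f hdec hi
    omega
  have hdec' : ∀ k, k < N → f' (k+1) ≤ f' k := by
    intro k _
    rw [hf'app, hf'app]
    by_cases hc2 : k < j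
    · by_cases hc1 : k + 1 < j
      · have h2 : 1 ≤ f (k+1) := hfj1 _ (by omega)
        have h1 := hdec k
        rw [if_pos hc1, if_pos hc2]
        omega
      · have e1 : k + 1 = j := by omega
        have e2 : j - 1 = k := by omega
        rw [if_neg hc1, if_pos hc2, e1]
        rw [e2] at hstrict
        omega
    · rw [if_neg (by omega), if_neg hc2]
      have := hdec k
      omega
  have hN' : f' N = 0 := by
    rw [hf'app, if_neg (by omega), hN]
  have hA := chain_fact N f (fun k _ => hdec k) hN
  have hB := chain_fact N f' hdec' hN'
  set d := f (j-1) - f j with hd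
  have hd1 : 1 ≤ d := by omega
  have hgap : ∀ i, i ≠ j - 1 → f' i - f' (i+1) = f i - f (i+1) := by
    intro i hi
    rw [hf'app, hf'app]
    have h1 := hdec i
    by_cases hc1 : i + 1 < j
    · have h2 : 1 ≤ f (i+1) := hfj1 _ (by omega)
      rw [if_pos hc1, if_pos (by omega)]
      omega
    · by_cases hc2 : i < j
      · exfalso; omega
      · rw [if_neg hc1, if_neg hc2]
        omega
  have hgapj : f' (j-1) - f' (j-1+1) = d - 1 := by
    have e : j - 1 + 1 = j := by omega
    rw [e, hf'app, hf'app, if_pos (by omega), if_neg (by omega)]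
    omega
  have hj1N : j - 1 ∈ range N := by simp; omega
  have hGsplit : ∏ i ∈ range N, (f i - f (i+1)).factorial
      = d.factorial * ∏ i ∈ (range N).erase (j-1), (f i - f (i+1)).factorial := by
    rw [← Finset.mul_prod_erase (range N) (fun i => (f i - f (i+1)).factorial) hj1N]
    have e : j - 1 + 1 = j := by omega
    rw [e]
  have hGsplit' : ∏ i ∈ range N, (f' i - f' (i+1)).factorial
      = (d-1).factorial * ∏ i ∈ (range N).erase (j-1), (f i - f (i+1)).factorial := by
    rw [← Finset.mul_prod_erase (range N) (fun i => (f' i - f' (i+1)).factorial) hj1N]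
    congr 1
    · rw [hgapj]
    · apply Finset.prod_congr rfl
      intro i hi
      simp only [Finset.mem_erase] at hi
      rw [hgap i hi.1]
  set G : ℕ := ∏ i ∈ (range N).erase (j-1), (f i - f (i+1)).factorial with hG
  have hGpos : 0 < G := Finset.prod_pos (fun i _ => Nat.factorial_pos _)
  have hf'0 : f' 0 = f 0 - 1 := by rw [hf'app, if_pos (by omega)]
  have hf01 : 1 ≤ f 0 := hfj1 0 (by omega)
  have key : (f 0 * chainN N f') * ((d-1).factorial * G) = (d * chainN N f) * ((d-1).factorial * G) := by
    calc (f 0 * chainN N f') * ((d-1).factorial * G)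
        = f 0 * (chainN N f' * ∏ i ∈ range N, (f' i - f' (i+1)).factorial) := by
          rw [hGsplit']; ring
      _ = f 0 * (f' 0).factorial := by rw [hB]
      _ = (f 0).factorial := by
          rw [hf'0]
          have e : f 0 = (f 0 - 1) + 1 := by omega
          rw [e]
          simp [Nat.factorial_succ]
      _ = chainN N f * ∏ i ∈ range N, (f i - f (i+1)).factorial := hA.symm
      _ = chainN N f * (d.factorial * G) := by rw [hGsplit]
      _ = chainN N f * ((d * (d-1).factorial) * G) := by
          congr 2
          have e : d = (d - 1) + 1 := by omega
          rw [e]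
          simp [Nat.factorial_succ]
      _ = (d * chainN N f) * ((d-1).factorial * G) := by ring
  exact Nat.eq_of_mul_eq_mul_right (by positivity) key

lemma apow_ratio (N : ℕ) (f : ℕ → ℕ) (j : ℕ) (hjN : j ≤ N)
    (hf1 : ∀ i, i < j → 1 ≤ f i) :
    bQ j * apow N (fun k => f k - if k < j then 1 else 0) = apow N f := by
  have hb : bQ j = ∏ i ∈ range N, (aQ i) ^ (if i < j then 1 else 0) := by
    unfold bQ
    rw [← Finset.prod_range_mul_prod_Ico _ hjN]
    have h1 : ∏ i ∈ range j, aQ i ^ (if i < j then 1 else 0) = ∏ i ∈ range j, aQ i := by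
      apply Finset.prod_congr rfl
      intro i hi
      simp only [Finset.mem_range] at hi
      rw [if_pos hi, pow_one]
    have h2 : ∏ i ∈ Ico j N, aQ i ^ (if i < j then 1 else 0) = 1 := by
      apply Finset.prod_eq_one
      intro i hi
      simp only [Finset.mem_Ico] at hi
      rw [if_neg (by omega), pow_zero]
    rw [h1, h2, mul_one]
  rw [hb]
  unfold apow
  rw [← Finset.prod_mul_distrib]
  apply Finset.prod_congr rfl
  intro i _
  rw [← pow_add]
  congr 1
  show (if i < j then 1 else 0) + (f i - if i < j then 1 else 0) = f i
  by_cases h : i < j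
  · have := hf1 i h
    simp only [if_pos h]
    omega
  · simp only [if_neg h]
    omega

lemma key_expand (N m : ℕ) (f : ℕ → ℕ) (hm : 1 ≤ m) (hmN : m ≤ N)
    (hdec : ∀ k, f (k+1) ≤ f k) (hsupp : ∀ k, N ≤ k → f k = 0)
    (hsum : ∑ i ∈ range N, f i = m) (h2 : 2 ≤ f 0) :
    ∑ j ∈ (Icc 1 (m-1)).filter (fun j => f j < f (j-1)),
        bQ j * wQ (m-j) N (fun k => f k - if k < j then 1 else 0)
      = wQ m N f := by
  have hN1 : 0 < N := by omega
  have hf0m : f 0 ≤ m := by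
    rw [← hsum]
    exact Finset.single_le_sum (fun i _ => Nat.zero_le _) (Finset.mem_range.2 hN1)
  have hm2 : 2 ≤ m := by omega
  have hfm1 : f (m-1) = 0 := by
    by_contra hc
    have h1 : 1 ≤ f (m-1) := by omega
    have hge : ∀ i ∈ range m, (if i = 0 then 2 else 1) ≤ f i := by
      intro i hi
      simp only [Finset.mem_range] at hi
      by_cases h : i = 0
      · rw [if_pos h, h]; exact h2
      · rw [if_neg h]
        exact le_trans h1 (dec_trans f hdec (by omega))
    have hle : ∑ i ∈ range m, (if i = 0 then 2 else 1) ≤ ∑ i ∈ range m, f i :=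
      Finset.sum_le_sum hge
    have hself : ∑ i ∈ range m, f i ≤ m := by
      have h5 : ∑ i ∈ range m, f i ≤ ∑ i ∈ range N, f i :=
        Finset.sum_le_sum_of_subset (Finset.range_subset_range.2 hmN)
      omega
    have hval : ∑ i ∈ range m, (if i = 0 then 2 else 1) = m + 1 := by
      rw [Finset.range_eq_Ico, Finset.sum_eq_sum_Ico_succ_bot (by omega : 0 < m)]
      have h1' : ∑ i ∈ Ico (0+1) m, (if i = 0 then 2 else 1) = ∑ i ∈ Ico 1 m, 1 := by
        apply Finset.sum_congr (by norm_num)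
        intro i hi
        simp only [Finset.mem_Ico] at hi
        rw [if_neg (by omega)]
      rw [h1', if_pos rfl]
      simp
      omega
    omega
  have hzero : ∀ k, m - 1 ≤ k → f k = 0 := by
    intro k hk
    have := dec_trans f hdec hk
    omega
  have hsummid : ∑ j ∈ Icc 1 (m-1), f j = m - f 0 := by
    have hrange : ∑ i ∈ range m, f i = m := by
      have h5 : ∑ i ∈ range m, f i = ∑ i ∈ range N, f i := by
        apply Finset.sum_subset (Finset.range_subset_range.2 hmN)
        intro x _ hx
        simp only [Finset.mem_range, not_lt] at hx
        exact hzero x (by omega)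
      omega
    have hsplit : ∑ i ∈ range m, f i = f 0 + ∑ i ∈ Ico 1 m, f i := by
      rw [Finset.range_eq_Ico, Finset.sum_eq_sum_Ico_succ_bot (by omega : 0 < m)]
    have hIccIco : Icc 1 (m-1) = Ico 1 m := by
      ext i; simp only [Finset.mem_Icc, Finset.mem_Ico]; omega
    rw [hIccIco]
    omega
  have habel : ∑ j ∈ Icc 1 (m-1), ((m:ℚ) - j) * ((f (j-1) : ℚ) - (f j : ℚ))
      = (m:ℚ) * ((f 0 : ℚ) - 1) := by
    have h1 : ∑ j ∈ Icc 1 (m-1), ((m:ℚ) - j) * ((f (j-1) : ℚ) - (f j : ℚ))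
        = ∑ k ∈ range (m-1), (((m-1:ℕ):ℚ) - k) * ((f k : ℚ) - (f (k+1) : ℚ)) := by
      have hIccIco : Icc 1 (m-1) = Ico 1 m := by
        ext i; simp only [Finset.mem_Icc, Finset.mem_Ico]; omega
      rw [hIccIco, Finset.sum_Ico_eq_sum_range]
      apply Finset.sum_congr rfl
      intro k hk
      have e1 : 1 + k - 1 = k := by omega
      have e2 : 1 + k = k + 1 := by omega
      rw [e1, e2]
      rw [Nat.cast_sub hm]
      push_cast
      ring
    rw [h1]
    have h2' := abel_sum (m-1) (fun k => (f k : ℚ))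
    rw [h2']
    have h3 : ∑ j ∈ Icc 1 (m-1), ((f j : ℕ) : ℚ) = ((m - f 0 : ℕ) : ℚ) := by
      rw [← hsummid]
      push_cast
      rfl
    rw [h3, Nat.cast_sub hm, Nat.cast_sub hf0m]
    ring
  have hQ2 : (2:ℚ) ≤ (f 0 : ℚ) := by exact_mod_cast h2
  have hKne : ((f 0:ℚ)) ≠ 0 := by linarith
  have hKne1 : ((f 0:ℚ) - 1) ≠ 0 := by linarith
  set C : ℚ := (chainN N f : ℚ) with hC
  set A : ℚ := apow N f with hA
  set K : ℚ := C * A / ((f 0 : ℚ) * ((f 0:ℚ) - 1)) with hK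
  have hterm : ∀ j ∈ (Icc 1 (m-1)).filter (fun j => f j < f (j-1)),
      bQ j * wQ (m-j) N (fun k => f k - if k < j then 1 else 0)
        = ((m:ℚ) - j) * ((f (j-1):ℚ) - (f j:ℚ)) * K := by
    intro j hj
    simp only [Finset.mem_filter, Finset.mem_Icc] at hj
    obtain ⟨⟨hj1, hjm⟩, hstrict⟩ := hj
    have hjN : j < N := by omega
    have hf1 : ∀ i, i < j → 1 ≤ f i := by
      intro i hi
      have h3 := dec_trans f hdec (show i ≤ j - 1 by omega)
      omega
    have hchainQ : (f 0 : ℚ) * ((chainN N (fun k => f k - if k < j then 1 else 0)) : ℚ)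
        = ((f (j-1):ℚ) - (f j:ℚ)) * C := by
      have hh := chain_ratio N f j hdec (hsupp N le_rfl) hj1 hjN hstrict
      calc (f 0 : ℚ) * ((chainN N (fun k => f k - if k < j then 1 else 0)) : ℚ)
          = ((f 0 * chainN N (fun k => f k - if k < j then 1 else 0) : ℕ) : ℚ) := by
            push_cast; ring
        _ = (((f (j-1) - f j) * chainN N f : ℕ) : ℚ) := by rw [hh]
        _ = ((f (j-1):ℚ) - (f j:ℚ)) * C := by
            rw [hC]
            push_cast [Nat.cast_sub (show f j ≤ f (j-1) by omega)]
            ring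
    have happQ : bQ j * apow N (fun k => f k - if k < j then 1 else 0) = A :=
      apow_ratio N f j (by omega) hf1
    have hf'0Q : (((fun k => f k - if k < j then 1 else 0) 0 : ℕ) : ℚ) = (f 0 : ℚ) - 1 := by
      show ((f 0 - if 0 < j then 1 else 0 : ℕ) : ℚ) = (f 0 : ℚ) - 1
      rw [if_pos (by omega)]
      rw [Nat.cast_sub (by omega)]
      simp
    have hmjQ : ((m - j : ℕ) : ℚ) = (m:ℚ) - j := Nat.cast_sub (by omega)
    unfold wQ
    rw [hf'0Q, hmjQ, hK]
    set X : ℚ := ((chainN N (fun k => f k - if k < j then 1 else 0)) : ℚ) with hX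
    set B : ℚ := apow N (fun k => f k - if k < j then 1 else 0) with hB
    field_simp
    linear_combination (((m:ℚ) - j) * (bQ j * B)) * hchainQ
      + (((m:ℚ) - j) * ((f (j-1):ℚ) - (f j:ℚ)) * C) * happQ
  rw [Finset.sum_congr rfl hterm]
  rw [Finset.sum_filter_of_ne]
  · rw [← Finset.sum_mul, habel, hK]
    unfold wQ
    rw [← hC, ← hA]
    field_simp
  · intro j hjs hne
    simp only [Finset.mem_Icc] at hjs
    by_contra hnp
    apply hne
    have hle : f j ≤ f (j-1) := by
      have := hdec (j-1)
      have e : j - 1 + 1 = j := by omega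
      rwa [e] at this
    have : f j = f (j-1) := by omega
    rw [this]
    ring

def removeF {N : ℕ} (j : ℕ) (t : Fin N → ℕ) : Fin N → ℕ :=
  fun i => t i - if (i:ℕ) < j then 1 else 0

def addF {N : ℕ} (j : ℕ) (t : Fin N → ℕ) : Fin N → ℕ :=
  fun i => t i + if (i:ℕ) < j then 1 else 0

lemma extN_coe {N : ℕ} (t : Fin N → ℕ) (i : Fin N) : extN t (i:ℕ) = t i := by
  unfold extN
  rw [dif_pos i.isLt]

lemma extN_removeF {N : ℕ} (j : ℕ) (t : Fin N → ℕ) :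
    extN (removeF j t) = fun k => extN t k - if k < j then 1 else 0 := by
  funext k
  unfold extN removeF
  by_cases h : k < N
  · rw [dif_pos h, dif_pos h]
  · rw [dif_neg h, dif_neg h]
    omega

lemma extN_addF {N : ℕ} (j : ℕ) (hjN : j ≤ N) (t : Fin N → ℕ) :
    extN (addF j t) = fun k => extN t k + if k < j then 1 else 0 := by
  funext k
  unfold extN addF
  by_cases h : k < N
  · rw [dif_pos h, dif_pos h]
  · rw [dif_neg h, dif_neg h, if_neg (by omega)]

lemma sum_ite_lt (N j : ℕ) (hjN : j ≤ N) :
    ∑ i ∈ range N, (if i < j then 1 else 0) = j := by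
  rw [Finset.sum_boole]
  have : (range N).filter (fun i => i < j) = range j := by
    ext i; simp; omega
  rw [this]
  simp

lemma sum_fin_ite_lt (N j : ℕ) (hjN : j ≤ N) :
    ∑ i : Fin N, (if (i:ℕ) < j then 1 else 0) = j := by
  rw [Fin.sum_univ_eq_sum_range (fun k => if k < j then 1 else 0) N]
  exact sum_ite_lt N j hjN

lemma one_le_entry {N m : ℕ} {t : Fin N → ℕ} (ht : t ∈ TT N m) {j : ℕ} (hj1 : 1 ≤ j)
    (hstrict : extN t j < extN t (j-1)) (i : Fin N) (hij : (i:ℕ) < j) : 1 ≤ t i := by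
  have h1 : extN t (j-1) ≤ extN t (i:ℕ) := extN_dec' ht (by omega)
  rw [extN_coe] at h1
  omega

lemma addF_removeF {N m : ℕ} {t : Fin N → ℕ} (ht : t ∈ TT N m) {j : ℕ} (hj1 : 1 ≤ j)
    (hstrict : extN t j < extN t (j-1)) : addF j (removeF j t) = t := by
  funext i
  unfold addF removeF
  by_cases h : (i:ℕ) < j
  · have := one_le_entry ht hj1 hstrict i h
    rw [if_pos h]
    omega
  · rw [if_neg h]
    omega

lemma removeF_addF {N : ℕ} (j : ℕ) (μ : Fin N → ℕ) : removeF j (addF j μ) = μ := by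
  funext i
  unfold addF removeF
  by_cases h : (i:ℕ) < j <;> simp [h]

lemma addF_mem {N m j : ℕ} {μ : Fin N → ℕ} (hm : 1 ≤ m) (hmN : m ≤ N)
    (hj1 : 1 ≤ j) (hjm : j ≤ m - 1) (hμ : μ ∈ TT N (m-j)) : addF j μ ∈ TT N m := by
  rw [mem_TT] at hμ ⊢
  obtain ⟨hsum, hmono⟩ := hμ
  constructor
  · unfold addF
    rw [Finset.sum_add_distrib, hsum, sum_fin_ite_lt N j (by omega)]
    omega
  · intro i i' hii
    unfold addF
    have := hmono i i' hii
    have hii' : (i:ℕ) ≤ (i':ℕ) := hii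
    split_ifs <;> omega

lemma removeF_mem {N m j : ℕ} {t : Fin N → ℕ} (hm : 1 ≤ m) (hmN : m ≤ N)
    (ht : t ∈ TT N m) (hj1 : 1 ≤ j) (hjm : j ≤ m - 1)
    (hstrict : extN t j < extN t (j-1)) : removeF j t ∈ TT N (m - j) := by
  have hinv := addF_removeF ht hj1 hstrict
  rw [mem_TT] at ht ⊢
  obtain ⟨hsum, hmono⟩ := ht
  constructor
  · have h1 : ∑ i, addF j (removeF j t) i = ∑ i, t i := by rw [hinv]
    unfold addF at h1
    rw [Finset.sum_add_distrib, sum_fin_ite_lt N j (by omega), hsum] at h1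
    omega
  · intro i i' hii
    unfold removeF
    have h1 := hmono i i' hii
    have hii' : (i:ℕ) ≤ (i':ℕ) := hii
    by_cases hc2 : (i':ℕ) < j
    · -- both < j ; need 1 ≤ t i'
      have h2 : extN t (j-1) ≤ extN t (i':ℕ) := extN_dec' (mem_TT.2 ⟨hsum, hmono⟩) (by omega)
      rw [extN_coe] at h2
      rw [if_pos hc2, if_pos (by omega)]
      omega
    · by_cases hc1 : (i:ℕ) < j
      · -- i < j ≤ i' : t i' - 0 ≤ t i - 1 ; need strictness
        rw [if_neg hc2, if_pos hc1]
        -- t i' ≤ extN t j < extN t (j-1) ≤ t i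
        have h2 : extN t (i':ℕ) ≤ extN t j := extN_dec' (mem_TT.2 ⟨hsum, hmono⟩) (by omega)
        have h3 : extN t (j-1) ≤ extN t (i:ℕ) := extN_dec' (mem_TT.2 ⟨hsum, hmono⟩) (by omega)
        rw [extN_coe] at h2 h3
        omega
      · rw [if_neg hc2, if_neg hc1]
        omega

lemma QQ_rec (N m : ℕ) (hm : 1 ≤ m) (hmN : m ≤ N) :
    QQ N m = m * bQ m + ∑ j ∈ Icc 1 (m-1), bQ j * QQ N (m-j) := by
  classical
  rw [QQ_split N m hm hmN]
  congr 1
  have hstep : ∀ t ∈ (TT N m).filter (fun t => 2 ≤ extN t 0),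
      wQ m N (extN t)
        = ∑ j ∈ (Icc 1 (m-1)).filter (fun j => extN t j < extN t (j-1)),
            bQ j * wQ (m-j) N (extN (removeF j t)) := by
    intro t ht
    simp only [Finset.mem_filter] at ht
    obtain ⟨htm, h2⟩ := ht
    rw [eq_comm]
    have hmain := key_expand N m (extN t) hm hmN (extN_dec htm) (extN_supp t)
      (extN_sum htm) h2
    rw [← hmain]
    apply Finset.sum_congr rfl
    intro j _
    rw [extN_removeF]
  rw [Finset.sum_congr rfl hstep]
  rw [Finset.sum_sigma']
  have hbij : ∑ p ∈ ((TT N m).filter (fun t => 2 ≤ extN t 0)).sigma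
        (fun t => (Icc 1 (m-1)).filter (fun j => extN t j < extN t (j-1))),
        bQ p.2 * wQ (m - p.2) N (extN (removeF p.2 p.1))
      = ∑ q ∈ (Icc 1 (m-1)).sigma (fun j => TT N (m-j)),
        bQ q.1 * wQ (m - q.1) N (extN q.2) := by
    apply Finset.sum_nbij' (i := fun p => (⟨p.2, removeF p.2 p.1⟩ : Σ _ : ℕ, (Fin N → ℕ)))
      (j := fun q => (⟨addF q.1 q.2, q.1⟩ : Σ _ : (Fin N → ℕ), ℕ))
    · rintro ⟨t, j⟩ hp
      simp only [Finset.mem_sigma, Finset.mem_filter, Finset.mem_Icc] at hp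
      obtain ⟨⟨htm, h2⟩, ⟨hj1, hjm⟩, hstrict⟩ := hp
      simp only [Finset.mem_sigma, Finset.mem_Icc]
      exact ⟨⟨hj1, hjm⟩, removeF_mem hm hmN htm hj1 hjm hstrict⟩
    · rintro ⟨j, μ⟩ hq
      simp only [Finset.mem_sigma, Finset.mem_Icc] at hq
      obtain ⟨⟨hj1, hjm⟩, hμ⟩ := hq
      have hμ1 : 1 ≤ extN μ 0 := by
        by_contra hc
        have hz : ∀ k, extN μ k = 0 := by
          intro k
          have := extN_dec' hμ (Nat.zero_le k)
          omega
        have := extN_sum hμ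
        rw [Finset.sum_eq_zero (fun k _ => hz k)] at this
        omega
      have hadd := extN_addF j (by omega : j ≤ N) μ
      simp only [Finset.mem_sigma, Finset.mem_filter, Finset.mem_Icc]
      refine ⟨⟨addF_mem hm hmN hj1 hjm hμ, ?_⟩, ⟨hj1, hjm⟩, ?_⟩
      · rw [hadd]
        simp only [if_pos (show 0 < j by omega)]
        omega
      · rw [hadd]
        simp only [if_pos (show j - 1 < j by omega), if_neg (show ¬ j < j by omega)]
        have := extN_dec' hμ (show j - 1 ≤ j by omega)
        omega
    · rintro ⟨t, j⟩ hp
      simp only [Finset.mem_sigma, Finset.mem_filter, Finset.mem_Icc] at hp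
      obtain ⟨⟨htm, h2⟩, ⟨hj1, hjm⟩, hstrict⟩ := hp
      have : addF j (removeF j t) = t := addF_removeF htm hj1 hstrict
      simp [this]
    · rintro ⟨j, μ⟩ hq
      have : removeF j (addF j μ) = μ := removeF_addF j μ
      simp [this]
    · rintro ⟨t, j⟩ _
      rfl
  rw [hbij, Finset.sum_sigma]
  apply Finset.sum_congr rfl
  intro j _
  rw [QQ, Finset.mul_sum]

lemma tail_sum (m : ℕ) (hm : 1 ≤ m) :
    ∑ j ∈ Icc 1 (m-1), bQ j * 2^(m-j-1) = 2^(m-1) - m * bQ m := by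
  induction m with
  | zero => omega
  | succ m ih =>
    by_cases hm1 : m = 0
    · subst hm1
      simp [bQ_one]
    · obtain ⟨M, rfl⟩ := Nat.exists_eq_succ_of_ne_zero hm1
      have ih' := ih (by omega)
      have e1 : M + 1 + 1 - 1 = M + 1 := by omega
      rw [e1, Finset.sum_Icc_succ_top (by omega : 1 ≤ M + 1)]
      have hterm : ∀ j ∈ Icc 1 M, bQ j * 2^(M+1+1-j-1) = 2 * (bQ j * 2^(M+1-j-1)) := by
        intro j hj
        simp only [Finset.mem_Icc] at hj
        have e2 : M+1+1-j-1 = (M+1-j-1) + 1 := by omega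
        rw [e2, pow_succ]
        ring
      have e3 : Icc 1 (M+1-1) = Icc 1 M := by congr 1
      rw [e3] at ih'
      rw [Finset.sum_congr rfl hterm, ← Finset.mul_sum, ih']
      have e4 : M+1+1-(M+1)-1 = 0 := by omega
      rw [e4, pow_zero, mul_one]
      have hb := bQ_succ (M+1) (by omega)
      have e5 : M+1-1 = M := by omega
      rw [e5]
      have e6 : (2:ℚ)^(M+1) = 2 * 2^M := by rw [pow_succ]; ring
      rw [e6]
      push_cast
      push_cast at hb
      linarith [hb]

lemma QQ_val (N m : ℕ) (hm : 1 ≤ m) (hmN : m ≤ N) : QQ N m = 2^(m-1) := by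
  induction m using Nat.strong_induction_on with
  | _ m ih =>
    rw [QQ_rec N m hm hmN]
    have hterm : ∀ j ∈ Icc 1 (m-1), bQ j * QQ N (m-j) = bQ j * 2^(m-j-1) := by
      intro j hj
      simp only [Finset.mem_Icc] at hj
      rw [ih (m-j) (by omega) (by omega) (by omega)]
    rw [Finset.sum_congr rfl hterm, tail_sum m hm]
    ring

theorem stmt9 (n : ℕ) (hn : 0 < n) :
    ∑ t ∈ partitionTuples n,
      (binomProd n t : ℚ) * ((n : ℚ) / (t ⟨0, hn⟩ : ℚ)) *
        ∏ i : Fin n, (((|2 * ((i : ℕ) + 1) - 3| : ℤ) : ℚ) / ((i : ℕ) + 1 : ℚ)) ^ (t i)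
      = 2 ^ (n - 1) := by
  have hPT : partitionTuples n = TT n n := rfl
  rw [hPT, ← QQ_val n n hn le_rfl]
  unfold QQ
  apply Finset.sum_congr rfl
  intro t _
  have hchain : (binomProd n t : ℕ) = chainN n (extN t) := by
    unfold binomProd chainN
    rw [← Fin.prod_univ_eq_prod_range (fun k => (extN t k).choose (extN t (k+1))) n]
    apply Finset.prod_congr rfl
    intro i _
    have e2 : extN t ((i:ℕ)+1) = (if h : (i:ℕ)+1 < n then t ⟨(i:ℕ)+1, h⟩ else 0) := rfl
    rw [extN_coe, e2]
  have hap : (∏ i : Fin n, (((|2 * ((i : ℕ) + 1) - 3| : ℤ) : ℚ) / ((i : ℕ) + 1 : ℚ)) ^ (t i))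
      = apow n (extN t) := by
    unfold apow
    rw [← Fin.prod_univ_eq_prod_range (fun k => (aQ k) ^ (extN t k)) n]
    apply Finset.prod_congr rfl
    intro i _
    rw [extN_coe]
    congr 1
  have h0 : (t ⟨0, hn⟩ : ℕ) = extN t 0 := by
    unfold extN
    rw [dif_pos hn]
  unfold wQ
  rw [← hchain, hap, h0]
  ring
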